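/- For integers h ≥ 6, let p(h) = ∑_{i=0}^{4h-12} binomial(i+2, 2) · (1/2)^{i+3} (the probability that a winning path of length 4 beats a losing path of length 4h - 10). Then for every positive integer N, real δ ∈ (0,1), and h = ⌈2·log₂ N + log₂(1/δ)⌉ + 5, we have p(h) ≥ 1 - δ/N². -/

import Mathlib

lemma closed_form (n : ℕ) :
    ∑ i ∈ Finset.range n, (((i + 2).choose 2 : ℝ)) * (1 / 2) ^ (i + 3)
      = 1 - ((n : ℝ) ^ 2 + 5 * n + 8) / 2 ^ (n + 3) := by
  induction n with
  | zero => norm_num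
  | succ n ih =>
    rw [Finset.sum_range_succ, ih]
    have h2 : ((n + 2).choose 2 : ℕ) * 2 = (n + 2) * (n + 1) := by
      rw [Nat.choose_two_right]
      have : (n + 2) - 1 = n + 1 := rfl
      rw [this]
      refine Nat.div_mul_cancel ?_
      rcases Nat.even_mul_succ_self (n + 1) with ⟨k, hk⟩
      exact ⟨k, by rw [mul_comm (n+2) (n+1), hk, two_mul]⟩
    have h2R : ((n + 2).choose 2 : ℝ) * 2 = ((n : ℝ) + 2) * ((n : ℝ) + 1) := by
      exact_mod_cast congrArg (Nat.cast (R := ℝ)) h2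
    have hp : (0 : ℝ) < 2 ^ (n + 3) := by positivity
    push_cast
    rw [pow_succ (2 : ℝ) (n + 3)]
    field_simp
    nlinarith [hp, h2R, show (2:ℝ)^(n+3) * ((n + 2).choose 2 : ℝ) * (1/2)^(n+3) = ((n + 2).choose 2 : ℝ) by rw [mul_right_comm, ← mul_pow]; norm_num]

lemma pow_bound (k : ℕ) : (16 * (k : ℝ) ^ 2 + 124 * k + 242) ≤ 2 ^ (3 * k + 10) := by
  induction k with
  | zero => norm_num
  | succ k ih =>
    have : (2 : ℝ) ^ (3 * (k + 1) + 10) = 8 * 2 ^ (3 * k + 10) := by ring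
    rw [this]
    push_cast
    nlinarith [ih, sq_nonneg (k : ℝ)]

theorem stmt18 (N : ℕ) (δ : ℝ) (h : ℕ) (hN : 0 < N) (hδ0 : 0 < δ) (hδ1 : δ < 1)
    (hh : (h : ℤ) = ⌈2 * Real.logb 2 N + Real.logb 2 (1 / δ)⌉ + 5) :
    ∑ i ∈ Finset.range (4 * h - 11), (((i + 2).choose 2 : ℝ)) * (1 / 2) ^ (i + 3)
      ≥ 1 - δ / (N : ℝ) ^ 2 := by
  set x := 2 * Real.logb 2 N + Real.logb 2 (1 / δ) with hx
  have hN1 : (1 : ℝ) ≤ (N : ℝ) := by exact_mod_cast hN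
  have hlogN : 0 ≤ Real.logb 2 N := Real.logb_nonneg one_lt_two hN1
  have hlogδ : 0 < Real.logb 2 (1 / δ) :=
    Real.logb_pos one_lt_two (one_lt_one_div hδ0 hδ1)
  have hxpos : 0 < x := by positivity
  have hceil : (1 : ℤ) ≤ ⌈x⌉ := Int.ceil_pos.mpr hxpos
  have hh6 : 6 ≤ h := by exact_mod_cast hh ▸ (by omega : (6 : ℤ) ≤ ⌈x⌉ + 5)
  -- h ≥ x as reals
  have hhx : x ≤ (h : ℝ) := by
    have h1 : x ≤ (⌈x⌉ : ℝ) := Int.le_ceil x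
    have h2 : ((h : ℤ) : ℝ) = (⌈x⌉ : ℝ) + 5 := by exact_mod_cast hh
    push_cast at h2
    linarith
  -- N^2 / δ ≤ 2 ^ h
  have hNpos : (0 : ℝ) < (N : ℝ) := by exact_mod_cast hN
  have key : (N : ℝ) ^ 2 / δ ≤ 2 ^ h := by
    have hxval : x = Real.logb 2 ((N : ℝ) ^ 2 / δ) := by
      rw [Real.logb_div (by positivity) (ne_of_gt hδ0), Real.logb_pow,
        hx, one_div, Real.logb_inv]
      push_cast
      ring
    have hq : (0 : ℝ) < (N : ℝ) ^ 2 / δ := by positivity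
    have := Real.rpow_le_rpow_of_exponent_le (x := 2) one_le_two (hxval ▸ hhx)
    rw [Real.rpow_logb two_pos (by norm_num) hq] at this
    calc (N : ℝ) ^ 2 / δ ≤ (2 : ℝ) ^ ((h : ℕ) : ℝ) := this
      _ = 2 ^ h := by rw [Real.rpow_natCast]
  -- reduce to the tail bound
  obtain ⟨k, hk⟩ : ∃ k, h = k + 6 := ⟨h - 6, by omega⟩
  have hm : 4 * h - 11 = 4 * k + 13 := by omega
  rw [hm, closed_form]
  have htail : ((4 * k + 13 : ℕ) : ℝ) ^ 2 + 5 * ((4 * k + 13 : ℕ) : ℝ) + 8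
      = 16 * (k : ℝ) ^ 2 + 124 * k + 242 := by push_cast; ring
  rw [htail]
  have h2h : (2 : ℝ) ^ (4 * k + 13 + 3) = 2 ^ (3 * k + 10) * 2 ^ h := by
    rw [hk, ← pow_add]; ring_nf
  have hδN : (1 : ℝ) / 2 ^ h ≤ δ / (N : ℝ) ^ 2 := by
    rw [div_le_div_iff₀ (by positivity) (by positivity)]
    have := (div_le_iff₀ hδ0).mp key
    nlinarith [pow_pos (two_pos (α := ℝ)) h]
  have hb := pow_bound k
  have hpos1 : (0 : ℝ) < 2 ^ (3 * k + 10) := by positivity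
  have hpos2 : (0 : ℝ) < 2 ^ h := by positivity
  have hfrac : (16 * (k : ℝ) ^ 2 + 124 * k + 242) / 2 ^ (4 * k + 13 + 3) ≤ 1 / 2 ^ h := by
    rw [h2h, div_le_div_iff₀ (by positivity) hpos2]
    calc (16 * (k : ℝ) ^ 2 + 124 * k + 242) * 2 ^ h ≤ 2 ^ (3 * k + 10) * 2 ^ h := by
          exact mul_le_mul_of_nonneg_right hb (le_of_lt hpos2)
      _ = 1 * (2 ^ (3 * k + 10) * 2 ^ h) := by ring
  linarith [le_trans hfrac hδN]
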